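/- Let f_n(t,v_n,u_{n-1},u_n,u_{n+1}) be continuously differentiable and τ_n(t,u_n), φ_n(t,u_n) (n ∈ ℤ) be twice continuously differentiable real functions satisfying the second-order determining equation for Lie point symmetries of the Toda-type equation identically. If either ∂f_n/∂u_{n+1} is nowhere zero for every n ∈ ℤ, or ∂f_n/∂u_{n-1} is nowhere zero for every n ∈ ℤ, then τ_n(t,u_n) depends on t alone and is independent of n: there exists a single function τ(t) such that τ_n(t,u) = τ(t) for all n ∈ ℤ, t ∈ ℝ, u ∈ ℝ. -/

import Mathlib

/-- The second-order determining equation for Lie point symmetries of the Toda-type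
equation `üₙ = fₙ(t, u̇ₙ, uₙ₋₁, uₙ, uₙ₊₁)`, with point-symmetry characteristic
`Qₙ = φₙ(t,uₙ) − τₙ(t,uₙ) u̇ₙ`, required to hold identically in the independent
jet variables `t, uₙ₋₁, uₙ, uₙ₊₁, vₙ₋₁, vₙ, vₙ₊₁` (the `v`'s stand for `u̇`).
The arguments of `f n` are `(t, u̇_n, u_{n-1}, u_n, u_{n+1})`. -/
def TodaTypeDetEq (f : ℤ → ℝ → ℝ → ℝ → ℝ → ℝ → ℝ) (τ φ : ℤ → ℝ → ℝ → ℝ) : Prop :=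
  ∀ (n : ℤ) (t um u0 up vm v0 vp : ℝ),
    (deriv (fun z => f n t z um u0 up) v0) *
        (deriv (fun s => φ n s u0) t +
          (deriv (fun z => φ n t z) u0 - deriv (fun s => τ n s u0) t) * v0 -
          deriv (fun z => τ n t z) u0 * v0 ^ 2) +
      ((deriv (fun z => f n t v0 z u0 up) um) *
          (φ (n - 1) t um + (τ n t u0 - τ (n - 1) t um) * vm) +
        (deriv (fun z => f n t v0 um z up) u0) *
          (φ n t u0 + (τ n t u0 - τ n t u0) * v0) +
        (deriv (fun z => f n t v0 um u0 z) up) *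
          (φ (n + 1) t up + (τ n t u0 - τ (n + 1) t up) * vp)) -
      deriv (deriv (fun s => φ n s u0)) t +
      (-2 * deriv (fun s => deriv (fun z => φ n s z) u0) t +
          deriv (deriv (fun s => τ n s u0)) t) * v0 +
      (-deriv (deriv (fun z => φ n t z)) u0 +
          2 * deriv (fun s => deriv (fun z => τ n s z) u0) t) * v0 ^ 2 +
      deriv (deriv (fun z => τ n t z)) u0 * v0 ^ 3 +
      τ n t u0 * deriv (fun s => f n s v0 um u0 up) t +
      (2 * deriv (fun s => τ n s u0) t - deriv (fun z => φ n t z) u0 +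
          3 * deriv (fun z => τ n t z) u0 * v0) * f n t v0 um u0 up = 0

/-- Theorem 3.3: for a Toda-type equation `üₙ = fₙ(t,u̇ₙ,uₙ₋₁,uₙ,uₙ₊₁)` satisfying one of
the nondegeneracy conditions, the coefficient `τₙ(t,uₙ)` of any Lie point symmetry
depends on `t` alone and is independent of `n`. -/
theorem todaType_tau_depends_on_t_only
    (f : ℤ → ℝ → ℝ → ℝ → ℝ → ℝ → ℝ) (τ φ : ℤ → ℝ → ℝ → ℝ)
    (hf : ∀ n, ContDiff ℝ 1
      (fun p : ℝ × ℝ × ℝ × ℝ × ℝ => f n p.1 p.2.1 p.2.2.1 p.2.2.2.1 p.2.2.2.2))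
    (hτ : ∀ n, ContDiff ℝ 2 (fun p : ℝ × ℝ => τ n p.1 p.2))
    (hφ : ∀ n, ContDiff ℝ 2 (fun p : ℝ × ℝ => φ n p.1 p.2))
    (hdet : TodaTypeDetEq f τ φ)
    (hnd : (∀ (n : ℤ) (t v a b c : ℝ), deriv (fun z => f n t v a b z) c ≠ 0) ∨
           (∀ (n : ℤ) (t v a b c : ℝ), deriv (fun z => f n t v z b c) a ≠ 0)) :
    ∃ τ0 : ℝ → ℝ, ∀ (n : ℤ) (t u : ℝ), τ n t u = τ0 t := by
  have key : ∀ (m : ℤ) (t a b : ℝ), τ m t a = τ (m + 1) t b := by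
    rcases hnd with h | h
    · intro m t a b
      have h0 := hdet m t 0 a b 0 0 0
      have h1 := hdet m t 0 a b 0 0 1
      have hz : deriv (fun z => f m t 0 0 a z) b * (τ m t a - τ (m + 1) t b) = 0 := by
        linear_combination h1 - h0
      have := (mul_eq_zero.mp hz).resolve_left (h m t 0 0 a b)
      linarith
    · intro m t a b
      have h0 := hdet (m + 1) t a b 0 0 0 0
      have h1 := hdet (m + 1) t a b 0 1 0 0
      rw [show m + 1 - 1 = m from by ring] at h0 h1
      have hz : deriv (fun z => f (m + 1) t 0 z b 0) a * (τ (m + 1) t b - τ m t a) = 0 := by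
        linear_combination h1 - h0
      have := (mul_eq_zero.mp hz).resolve_left (h (m + 1) t 0 a b 0)
      linarith
  refine ⟨fun t => τ 0 t 0, fun n t u => ?_⟩
  have gconst : ∀ k : ℤ, τ k t 0 = τ 0 t 0 := by
    intro k
    induction k using Int.induction_on with
    | zero => rfl
    | succ i ih => rw [← key i t 0 0, ih]
    | pred i ih =>
      have := key (-(i : ℤ) - 1) t 0 0
      rw [show -(i : ℤ) - 1 + 1 = -(i : ℤ) from by ring] at this
      rw [this, ih]
  rw [key n t u 0, gconst (n + 1)]
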